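/- For s, τ > 0 and a continuous function φ of exponential order, M_{ρ,m}[φ](s,τ) = (1/s) · S[ t ↦ φ(t)/((t^m/τ^m) + τ^m)^ρ ](τ/s), where S is the Sumudu transform. -/

import Mathlib

open MeasureTheory Set

/-- M_{ρ,m}[φ](s,τ) = (1/s) S[t ↦ φ(t)/((t^m/τ^m)+τ^m)^ρ](τ/s),
where S is the Sumudu transform S[ψ](u) = ∫₀^∞ e^{-t} ψ(ut) dt. -/
theorem Mtransform_eq_sumudu
    (ρ : ℂ) (hρ : 0 ≤ ρ.re) (m : ℕ) (hm : 0 < m) (φ : ℝ → ℂ)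
    (hφ : Continuous φ)
    (K γ : ℝ) (hK : 0 < K) (hγ : 0 < γ)
    (hexp : ∀ t ≥ (0:ℝ), ‖φ t‖ ≤ K * Real.exp (t / γ))
    (s τ : ℝ) (hs : 0 < s) (hτ : 0 < τ) :
    (∫ t in Ioi (0:ℝ), (Real.exp (-(s * t)) : ℂ) * φ (τ * t) /
        (((t ^ m + τ ^ m : ℝ) : ℂ) ^ ρ))
      = (1 / (s : ℂ)) *
        ∫ t in Ioi (0:ℝ), (Real.exp (-t) : ℂ) *
          (φ (τ / s * t) /
            ((((τ / s * t) ^ m / τ ^ m + τ ^ m : ℝ) : ℂ) ^ ρ)) := by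
  set g : ℝ → ℂ := fun t => (Real.exp (-t) : ℂ) *
      (φ (τ / s * t) / ((((τ / s * t) ^ m / τ ^ m + τ ^ m : ℝ) : ℂ) ^ ρ)) with hg
  have hsub : ∫ t in Ioi (0:ℝ), g (s * t) = s⁻¹ • ∫ t in Ioi (s * 0), g t := by
    exact MeasureTheory.integral_comp_mul_left_Ioi g 0 hs
  rw [mul_zero] at hsub
  have hpt : (fun t : ℝ => (Real.exp (-(s * t)) : ℂ) * φ (τ * t) /
      (((t ^ m + τ ^ m : ℝ) : ℂ) ^ ρ)) = fun t : ℝ => g (s * t) := by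
    funext t
    have h1 : τ / s * (s * t) = τ * t := by field_simp
    have h2 : (τ / s * (s * t)) ^ m / τ ^ m = t ^ m := by
      rw [h1, mul_pow, mul_div_cancel_left₀ _ (pow_ne_zero m hτ.ne')]
    simp only [hg]
    rw [h2, h1]
    ring
  rw [hpt, hsub, Complex.real_smul, one_div]
  push_cast
  ring
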